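/- Let X(P2) = (m−1)/(2α(mN−N+2)) and Y(P2) = 1/(α(mN−N+2)). Let T ∈ (0,∞], and let (X,Y,Z) : [0,T) → ℝ³ be a differentiable solution of the system (PSsyst1) such that X(t) ≥ 0 and Z(t) ≥ 0 for all t ∈ [0,T), and such that X(0) < X(P2) and Y(0) < Y(P2). Then X(t) < X(P2) and Y(t) < Y(P2) for all t ∈ [0,T); that is, the region {0 ≤ X < X(P2), Y < Y(P2), Z ≥ 0} is positively invariant for (PSsyst1). -/

import Mathlib

open Real Filter Set Topology

noncomputable def alphaC (m p σ : ℝ) : ℝ := (σ + 2) / (σ * (m - 1) + 2 * (p - 1))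

noncomputable def betaC (m p σ : ℝ) : ℝ := (m - p) / (σ * (m - 1) + 2 * (p - 1))

/-- If `f` tends to `f t0` from within `D ⊇ Ioo 0 t0` and `f < c` on `Ioo 0 t0`, then
`f t0 ≤ c`. -/
lemma left_lim_le_aux {f : ℝ → ℝ} {D : Set ℝ} {t0 c : ℝ} (ht0 : 0 < t0)
    (hc : ContinuousWithinAt f D t0) (hsub : Ioo 0 t0 ⊆ D)
    (h : ∀ t ∈ Ioo (0:ℝ) t0, f t < c) : f t0 ≤ c := by
  have hne : (𝓝[Ioo (0:ℝ) t0] t0).NeBot := by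
    rw [nhdsWithin_Ioo_eq_nhdsLT ht0]
    infer_instance
  refine le_of_tendsto (hc.tendsto.mono_left (nhdsWithin_mono _ hsub)) ?_
  filter_upwards [self_mem_nhdsWithin] with t ht
  exact (h t ht).le

/-- If `f t < f t0` for `t` just before `t0` and `f` has derivative `f'` within `D` at `t0`,
then `0 ≤ f'`. -/
lemma left_deriv_nonneg_aux {f : ℝ → ℝ} {D : Set ℝ} {f' t0 : ℝ} (ht0 : 0 < t0)
    (hd : HasDerivWithinAt f f' D t0) (hsub : Ioo 0 t0 ⊆ D)
    (h : ∀ t ∈ Ioo (0:ℝ) t0, f t < f t0) : 0 ≤ f' := by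
  have hne : (𝓝[Ioo (0:ℝ) t0] t0).NeBot := by
    rw [nhdsWithin_Ioo_eq_nhdsLT ht0]
    infer_instance
  have hnot : t0 ∉ Ioo (0:ℝ) t0 := fun hh => lt_irrefl _ hh.2
  have hd' : HasDerivWithinAt f f' (Ioo 0 t0) t0 := hd.mono hsub
  rw [hasDerivWithinAt_iff_tendsto_slope' hnot] at hd'
  refine ge_of_tendsto hd' ?_
  filter_upwards [self_mem_nhdsWithin] with t ht
  have h1 : f t - f t0 < 0 := sub_neg.2 (h t ht)
  have h2 : t - t0 < 0 := sub_neg.2 ht.2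
  have h3 : 0 < (f t - f t0) / (t - t0) := div_pos_of_neg_of_neg h1 h2
  rw [slope_def_field]
  linarith

set_option maxHeartbeats 2000000 in
theorem region_below_P2_positively_invariant (m p σ : ℝ) (N : ℕ) (hm : 1 < m) (hp0 : 0 < p) (hp1 : p < 1)
    (hσ : 2 * (1 - p) / (m - 1) < σ) (hN : 1 ≤ N)
    (T : WithTop ℝ) (hT : 0 < T)
    (D : Set ℝ) (hD : D = {t : ℝ | 0 ≤ t ∧ (t : WithTop ℝ) < T})
    (X Y Z : ℝ → ℝ)
    (hXnn : ∀ t ∈ D, 0 ≤ X t) (hZnn : ∀ t ∈ D, 0 ≤ Z t)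
    (hdX : ∀ t ∈ D, HasDerivWithinAt X (X t * ((m - 1) * Y t - 2 * X t)) D t)
    (hdY : ∀ t ∈ D, HasDerivWithinAt Y
      (-(Y t) ^ 2 - betaC m p σ / alphaC m p σ * Y t + X t - (N : ℝ) * X t * Y t - Z t) D t)
    (hdZ : ∀ t ∈ D, HasDerivWithinAt Z (Z t * ((m + p - 2) * Y t + (σ - 2) * X t)) D t)
    (hX0 : X 0 < (m - 1) / (2 * alphaC m p σ * (m * (N : ℝ) - (N : ℝ) + 2)))
    (hY0 : Y 0 < 1 / (alphaC m p σ * (m * (N : ℝ) - (N : ℝ) + 2))) :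
    ∀ t ∈ D, X t < (m - 1) / (2 * alphaC m p σ * (m * (N : ℝ) - (N : ℝ) + 2)) ∧
      Y t < 1 / (alphaC m p σ * (m * (N : ℝ) - (N : ℝ) + 2)) := by
  have hm1 : (0:ℝ) < m - 1 := by linarith
  have hσ0 : 0 < σ := lt_trans (div_pos (by linarith) hm1) hσ
  have hL : 0 < σ * (m - 1) + 2 * (p - 1) := by
    have := (div_lt_iff₀ hm1).mp hσ
    nlinarith
  have hNR : (1:ℝ) ≤ (N:ℝ) := by exact_mod_cast hN
  have hMN : (0:ℝ) < m * (N:ℝ) - (N:ℝ) + 2 := by nlinarith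
  have hA : 0 < alphaC m p σ := div_pos (by linarith) hL
  have hAMN : 0 < alphaC m p σ * (m * (N:ℝ) - (N:ℝ) + 2) := mul_pos hA hMN
  set a := (m - 1) / (2 * alphaC m p σ * (m * (N : ℝ) - (N : ℝ) + 2)) with ha_def
  set b := (1:ℝ) / (alphaC m p σ * (m * (N : ℝ) - (N : ℝ) + 2)) with hb_def
  set R := betaC m p σ / alphaC m p σ with hR_def
  clear_value a b R
  have ha : 0 < a := by rw [ha_def]; positivity
  have hb : 0 < b := by rw [hb_def]; positivity
  have hab : (m - 1) * b = 2 * a := by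
    rw [ha_def, hb_def]
    field_simp
  have hRval : R = (m - p) / (σ + 2) := by
    rw [hR_def, betaC, alphaC]
    rw [div_div_div_comm, div_self (ne_of_gt hL), div_one]
  have hRpos : 0 < R := by
    rw [hRval]; exact div_pos (by linarith) (by linarith)
  have hNb : (N:ℝ) * b < 1 := by
    rw [hb_def, mul_one_div, div_lt_one hAMN, alphaC, div_mul_eq_mul_div, lt_div_iff₀ hL]
    nlinarith [mul_pos (show (0:ℝ) < (N:ℝ) by linarith) (show (0:ℝ) < m - p by linarith)]
  have hid : -(b^2) - R * b + a - (N:ℝ) * a * b = 0 := by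
    rw [ha_def, hb_def, hRval, alphaC]
    have h3 : σ + 2 ≠ 0 := by linarith
    field_simp
    ring
  -- basic facts about D
  have h0D : (0:ℝ) ∈ D := by
    rw [hD]
    refine ⟨le_refl 0, ?_⟩
    simpa using hT
  have hDord : ∀ {s t : ℝ}, t ∈ D → 0 ≤ s → s ≤ t → s ∈ D := by
    intro s t htD hs hst
    rw [hD] at htD ⊢
    exact ⟨hs, lt_of_le_of_lt (WithTop.coe_le_coe.mpr hst) htD.2⟩
  have hXc : ContinuousOn X D := fun t ht => (hdX t ht).continuousWithinAt
  have hYc : ContinuousOn Y D := fun t ht => (hdY t ht).continuousWithinAt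
  have hZc : ContinuousOn Z D := fun t ht => (hdZ t ht).continuousWithinAt
  intro t1 ht1
  by_contra hcon
  rw [not_and_or, not_lt, not_lt] at hcon
  have ht1nn : 0 ≤ t1 := by rw [hD] at ht1; exact ht1.1
  have hIccD : Icc (0:ℝ) t1 ⊆ D := fun s hs => hDord ht1 hs.1 hs.2
  set S := {t : ℝ | t ∈ Icc (0:ℝ) t1 ∧ (a ≤ X t ∨ b ≤ Y t)} with hS_def
  have hSclosed : IsClosed S := by
    have h1 : IsClosed (Icc (0:ℝ) t1 ∩ X ⁻¹' Ici a) :=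
      (hXc.mono hIccD).preimage_isClosed_of_isClosed isClosed_Icc isClosed_Ici
    have h2 : IsClosed (Icc (0:ℝ) t1 ∩ Y ⁻¹' Ici b) :=
      (hYc.mono hIccD).preimage_isClosed_of_isClosed isClosed_Icc isClosed_Ici
    have hSeq : S = (Icc (0:ℝ) t1 ∩ X ⁻¹' Ici a) ∪ (Icc (0:ℝ) t1 ∩ Y ⁻¹' Ici b) := by
      ext t
      simp only [hS_def, mem_setOf_eq, mem_union, mem_inter_iff, mem_preimage, mem_Ici]
      tauto
    rw [hSeq]
    exact h1.union h2
  have hSne : S.Nonempty := ⟨t1, by rw [hS_def]; exact ⟨⟨ht1nn, le_refl t1⟩, hcon⟩⟩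
  have hSbdd : BddBelow S := ⟨0, fun t ht => by rw [hS_def] at ht; exact ht.1.1⟩
  set t0 := sInf S with ht0_def
  clear_value S t0
  have ht0S : t0 ∈ S := by rw [ht0_def]; exact hSclosed.csInf_mem hSne hSbdd
  rw [hS_def] at ht0S
  obtain ⟨⟨ht0nn, ht0le⟩, ht0or⟩ := ht0S
  have ht0D : t0 ∈ D := hIccD ⟨ht0nn, ht0le⟩
  have ht0pos : 0 < t0 := by
    rcases lt_or_eq_of_le ht0nn with h | h
    · exact h
    · exfalso
      rcases ht0or with h' | h' <;> rw [← h] at h'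
      · linarith
      · linarith
  have hbefore : ∀ t ∈ Ioo (0:ℝ) t0, X t < a ∧ Y t < b := by
    intro t ht
    by_contra hc
    rw [not_and_or, not_lt, not_lt] at hc
    have htS : t ∈ S := by rw [hS_def]; exact ⟨⟨ht.1.le, ht.2.le.trans ht0le⟩, hc⟩
    have hle : t0 ≤ t := by rw [ht0_def]; exact csInf_le hSbdd htS
    exact absurd hle (not_le.2 ht.2)
  have hIooD : Ioo (0:ℝ) t0 ⊆ D := fun s hs => hDord ht0D hs.1.le hs.2.le
  have hIccD0 : Icc (0:ℝ) t0 ⊆ D := fun s hs => hDord ht0D hs.1 hs.2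
  have hXt0 : X t0 ≤ a :=
    left_lim_le_aux ht0pos (hXc t0 ht0D) hIooD (fun t ht => (hbefore t ht).1)
  have hYt0 : Y t0 ≤ b :=
    left_lim_le_aux ht0pos (hYc t0 ht0D) hIooD (fun t ht => (hbefore t ht).2)
  by_cases hYb : Y t0 = b
  · -- corner / Y-boundary case
    have hdYnn : 0 ≤ -(Y t0)^2 - R * Y t0 + X t0 - (N:ℝ) * X t0 * Y t0 - Z t0 :=
      left_deriv_nonneg_aux ht0pos (hdY t0 ht0D) hIooD
        (fun t ht => by rw [hYb]; exact (hbefore t ht).2)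
    have hZt0 := hZnn t0 ht0D
    have heq : -(Y t0)^2 - R * Y t0 + X t0 - (N:ℝ) * X t0 * Y t0 - Z t0
        = (X t0 - a) * (1 - (N:ℝ) * b) - Z t0 := by
      rw [hYb]; linear_combination hid
    rw [heq] at hdYnn
    have h1 : 0 ≤ (X t0 - a) * (1 - (N:ℝ) * b) := by linarith
    have hXa2 : X t0 = a := by
      refine le_antisymm hXt0 ?_
      by_contra hlt
      push_neg at hlt
      nlinarith [h1, mul_pos (sub_pos.2 hlt) (show (0:ℝ) < 1 - (N:ℝ)*b by linarith)]
    have hZ0 : Z t0 = 0 := by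
      have h3 : (X t0 - a) * (1 - (N:ℝ)*b) = 0 := by rw [hXa2]; ring
      refine le_antisymm (by linarith) hZt0
    -- Gronwall-type argument on [0, t0]
    obtain ⟨C, hC⟩ := (isCompact_Icc (a := (0:ℝ)) (b := t0)).exists_bound_of_continuousOn
      (hYc.mono hIccD0)
    have hC0 : 0 ≤ C := le_trans (norm_nonneg _) (hC 0 ⟨le_refl 0, ht0pos.le⟩)
    set K := 2*a + (2*b + R + (N:ℝ)*a) + (abs (m+p-2)*C + abs (σ-2)*a) with hK_def
    clear_value K
    have hNa : 0 ≤ (N:ℝ)*a := by positivity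
    have habs1 : 0 ≤ abs (m+p-2)*C := mul_nonneg (abs_nonneg _) hC0
    have habs2 : 0 ≤ abs (σ-2)*a := mul_nonneg (abs_nonneg _) ha.le
    -- pointwise derivative lower bound
    have hkey : ∀ t ∈ Ioo (0:ℝ) t0,
        0 ≤ (-(X t * ((m - 1) * Y t - 2 * X t))
          - (-(Y t)^2 - R * Y t + X t - (N:ℝ) * X t * Y t - Z t)
          + Z t * ((m + p - 2) * Y t + (σ - 2) * X t))
          + K * ((a - X t) + (b - Y t) + Z t) := by
      intro t ht
      have htI : t ∈ Icc (0:ℝ) t0 := ⟨ht.1.le, ht.2.le⟩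
      have hx0 : 0 ≤ X t := hXnn t (hIooD ht)
      have hxa : X t ≤ a := (hbefore t ht).1.le
      have hyb : Y t ≤ b := (hbefore t ht).2.le
      have hz : 0 ≤ Z t := hZnn t (hIooD ht)
      have hyC : |Y t| ≤ C := by
        have := hC t htI; rwa [Real.norm_eq_abs] at this
      have e1 : -(abs (m+p-2) * C) ≤ (m+p-2) * Y t := by
        have h1 : |(m+p-2) * Y t| ≤ abs (m+p-2) * C := by
          rw [abs_mul]; exact mul_le_mul_of_nonneg_left hyC (abs_nonneg _)
        have h2 := neg_abs_le ((m+p-2) * Y t)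
        linarith
      have e2 : -(abs (σ-2) * a) ≤ (σ-2) * X t := by
        have h1 : |(σ-2) * X t| ≤ abs (σ-2) * a := by
          rw [abs_mul, abs_of_nonneg hx0]
          exact mul_le_mul_of_nonneg_left hxa (abs_nonneg _)
        have h2 := neg_abs_le ((σ-2) * X t)
        linarith
      have hNx : (N:ℝ) * X t ≤ (N:ℝ) * a :=
        mul_le_mul_of_nonneg_left hxa (by positivity)
      have keyeq : (-(X t * ((m - 1) * Y t - 2 * X t))
          - (-(Y t)^2 - R * Y t + X t - (N:ℝ) * X t * Y t - Z t)
          + Z t * ((m + p - 2) * Y t + (σ - 2) * X t))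
          + K * ((a - X t) + (b - Y t) + Z t)
          = X t * (m-1) * (b - Y t) + (1 - (N:ℝ)*b) * (a - X t)
            + (K - 2 * X t) * (a - X t)
            + (K - (Y t + b + R + (N:ℝ) * X t)) * (b - Y t)
            + Z t * (1 + ((m+p-2) * Y t + (σ-2) * X t) + K) := by
        linear_combination (-1 : ℝ) * hid + (-(X t)) * hab
      rw [keyeq]
      have T1 : 0 ≤ X t * (m-1) * (b - Y t) :=
        mul_nonneg (mul_nonneg hx0 hm1.le) (by linarith)
      have T2 : 0 ≤ (1 - (N:ℝ)*b) * (a - X t) :=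
        mul_nonneg (by linarith) (by linarith)
      have T3 : 0 ≤ (K - 2 * X t) * (a - X t) := by
        refine mul_nonneg ?_ (by linarith)
        rw [hK_def]; linarith
      have T4 : 0 ≤ (K - (Y t + b + R + (N:ℝ) * X t)) * (b - Y t) := by
        refine mul_nonneg ?_ (by linarith)
        rw [hK_def]; linarith
      have T5 : 0 ≤ Z t * (1 + ((m+p-2) * Y t + (σ-2) * X t) + K) := by
        refine mul_nonneg hz ?_
        rw [hK_def]; linarith
      linarith
    -- derivative of the weighted quantity
    have hFd : ∀ t ∈ Ioo (0:ℝ) t0,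
        HasDerivAt (fun s => ((a - X s) + (b - Y s) + Z s) * Real.exp (K * s))
          (((-(X t * ((m - 1) * Y t - 2 * X t))
            - (-(Y t)^2 - R * Y t + X t - (N:ℝ) * X t * Y t - Z t)
            + Z t * ((m + p - 2) * Y t + (σ - 2) * X t))
            + K * ((a - X t) + (b - Y t) + Z t)) * Real.exp (K * t)) t := by
      intro t ht
      have hmem : D ∈ 𝓝 t := mem_nhds_iff.mpr ⟨Ioo 0 t0, hIooD, isOpen_Ioo, ht⟩
      have hX' := (hdX t (hIooD ht)).hasDerivAt hmem
      have hY' := (hdY t (hIooD ht)).hasDerivAt hmem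
      have hZ' := (hdZ t (hIooD ht)).hasDerivAt hmem
      have hw' : HasDerivAt (fun s => (a - X s) + (b - Y s) + Z s)
          ((-(X t * ((m - 1) * Y t - 2 * X t))
            + -(-(Y t)^2 - R * Y t + X t - (N:ℝ) * X t * Y t - Z t))
            + Z t * ((m + p - 2) * Y t + (σ - 2) * X t)) t :=
        ((hX'.const_sub a).add (hY'.const_sub b)).add hZ'
      have hlin : HasDerivAt (fun s : ℝ => K * s) K t := by
        simpa using (hasDerivAt_id t).const_mul K
      have hexp : HasDerivAt (fun s : ℝ => Real.exp (K * s)) (Real.exp (K * t) * K) t :=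
        hlin.exp
      have : HasDerivAt (fun s => ((a - X s) + (b - Y s) + Z s) * Real.exp (K * s)) _ t := hw'.mul hexp
      convert this using 1
      ring
    have hmono : MonotoneOn (fun s => ((a - X s) + (b - Y s) + Z s) * Real.exp (K * s))
        (Icc (0:ℝ) t0) := by
      apply monotoneOn_of_deriv_nonneg (convex_Icc 0 t0)
      · apply ContinuousOn.mul
        · exact ((continuousOn_const.sub (hXc.mono hIccD0)).add
            (continuousOn_const.sub (hYc.mono hIccD0))).add (hZc.mono hIccD0)
        · exact (Real.continuous_exp.comp (continuous_const.mul continuous_id)).continuousOn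
      · rw [interior_Icc]
        intro t ht
        exact (hFd t ht).differentiableAt.differentiableWithinAt
      · rw [interior_Icc]
        intro t ht
        rw [(hFd t ht).deriv]
        exact mul_nonneg (hkey t ht) (Real.exp_pos _).le
    have hle := hmono (left_mem_Icc.mpr ht0pos.le) (right_mem_Icc.mpr ht0pos.le) ht0pos.le
    simp only [] at hle
    have hzero : ((a - X t0) + (b - Y t0) + Z t0) * Real.exp (K * t0) = 0 := by
      rw [hXa2, hYb, hZ0]; ring
    have hpos : 0 < ((a - X 0) + (b - Y 0) + Z 0) * Real.exp (K * 0) := by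
      have hz0 := hZnn 0 h0D
      have : 0 < (a - X 0) + (b - Y 0) + Z 0 := by linarith
      exact mul_pos this (Real.exp_pos _)
    rw [hzero] at hle
    linarith
  · -- X-boundary case
    have hXa2 : X t0 = a := by
      rcases ht0or with h | h
      · exact le_antisymm hXt0 h
      · exact absurd (le_antisymm hYt0 h) hYb
    have hYlt : Y t0 < b := lt_of_le_of_ne hYt0 hYb
    have hdXnn : 0 ≤ X t0 * ((m - 1) * Y t0 - 2 * X t0) :=
      left_deriv_nonneg_aux ht0pos (hdX t0 ht0D) hIooD
        (fun t ht => by rw [hXa2]; exact (hbefore t ht).1)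
    rw [hXa2] at hdXnn
    have hY2 : (m-1) * Y t0 < 2 * a := by
      calc (m-1) * Y t0 < (m-1) * b := by exact mul_lt_mul_of_pos_left hYlt hm1
      _ = 2 * a := hab
    nlinarith [hdXnn, mul_pos ha (show (0:ℝ) < 2*a - (m-1)*Y t0 by linarith)]
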